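/- arXiv:2507.12169 — 5 statements merged into one kernel-verified Lean document; each statement's English description precedes it below -/
import Mathlib

section
/- Suppose φ has finite right derivative φ'(0⁺) ∈ [0,∞) at 0. Then for every ς ∈ (0,∞), lim_{t→∞} h_ς(t)/t = (φ'(0⁺))^{1/2}·ς. -/
/-!
Near `0`, `φ s` lies between `r² s` for any `r² < φ'(0⁺)` and any `r² > φ'(0⁺)`.
For the upper bound, `τ = 2 r t / ς` with `r² > φ'(0⁺)` gives `h_ς(t) ≤ ς r t` for large `t`.
For the lower bound, Young's inequality `r² t² / τ + ς² τ / 4 ≥ ς r t` bounds the objective at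
every `τ` with `1/τ` in the range where `φ s ≥ r² s`; for the other `τ`, monotonicity gives
`φ(1/τ) t² ≥ φ(s₀) t²`, which grows quadratically in `t`. Then let `r → √φ'(0⁺)`.
-/

open Set Filter Topology

/-- `hS φ ς t = inf_{τ>0} { φ(1/τ)·t² + (ς²/4)·τ }`. -/
noncomputable def hS (φ : ℝ → ℝ) (ς t : ℝ) : ℝ :=
  sInf {y : ℝ | ∃ τ : ℝ, 0 < τ ∧ y = φ (1/τ) * t^2 + ς^2/4 * τ}

lemma mul_le_sq_div_add_sq_div_four_mul (x y : ℝ) {τ : ℝ} (hτ : 0 < τ) :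
    x * y ≤ x ^ 2 / τ + y ^ 2 / 4 * τ := by
  rw [div_add' _ _ _ hτ.ne', le_div_iff₀ hτ]
  nlinarith [sq_nonneg (x - y * τ / 2)]

lemma eventually_le_mul_of_tendsto_div {f : ℝ → ℝ} {c k : ℝ}
    (hf : Tendsto (fun s => f s / s) (𝓝[>] 0) (𝓝 c)) (hk : c < k) :
    ∀ᶠ s in 𝓝[>] 0, f s ≤ k * s := by
  filter_upwards [hf.eventually (gt_mem_nhds hk), self_mem_nhdsWithin] with s hs (hs₀ : 0 < s)
  exact ((div_lt_iff₀ hs₀).1 hs).le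

lemma eventually_mul_le_of_tendsto_div {f : ℝ → ℝ} {c k : ℝ}
    (hf : Tendsto (fun s => f s / s) (𝓝[>] 0) (𝓝 c)) (hk : k < c) :
    ∀ᶠ s in 𝓝[>] 0, k * s ≤ f s := by
  filter_upwards [hf.eventually (lt_mem_nhds hk), self_mem_nhdsWithin] with s hs (hs₀ : 0 < s)
  exact ((lt_div_iff₀ hs₀).1 hs).le

section hS

variable {φ : ℝ → ℝ} {ς : ℝ}

lemma hS_le (hnonneg : ∀ t ≥ (0:ℝ), 0 ≤ φ t) (t : ℝ) {τ : ℝ} (hτ : 0 < τ) :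
    hS φ ς t ≤ φ (1/τ) * t^2 + ς^2/4 * τ := by
  refine csInf_le ⟨0, ?_⟩ ⟨τ, hτ, rfl⟩
  rintro y ⟨τ, hτ, rfl⟩
  have := hnonneg (1/τ) (by positivity)
  positivity

lemma le_hS {t B : ℝ} (h : ∀ τ : ℝ, 0 < τ → B ≤ φ (1/τ) * t^2 + ς^2/4 * τ) : B ≤ hS φ ς t :=
  le_csInf ⟨_, 1, one_pos, rfl⟩ fun _ ⟨τ, hτ, hy⟩ => hy ▸ h τ hτ

lemma eventually_hS_div_le (hnonneg : ∀ t ≥ (0:ℝ), 0 ≤ φ t) (hς : 0 < ς) {r : ℝ} (hr : 0 < r)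
    (hφ : ∀ᶠ s in 𝓝[>] 0, φ s ≤ r ^ 2 * s) :
    ∀ᶠ t in atTop, hS φ ς t / t ≤ ς * r := by
  have hτ : Tendsto (fun t => (2 * r / ς * t)⁻¹) atTop (𝓝[>] 0) :=
    tendsto_inv_atTop_nhdsGT_zero.comp (tendsto_id.const_mul_atTop (by positivity))
  filter_upwards [hτ.eventually hφ, eventually_gt_atTop 0] with t hφt ht
  rw [div_le_iff₀ ht]
  calc hS φ ς t ≤ φ (1 / (2 * r / ς * t)) * t ^ 2 + ς ^ 2 / 4 * (2 * r / ς * t) :=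
        hS_le hnonneg t (by positivity)
    _ ≤ r ^ 2 * (2 * r / ς * t)⁻¹ * t ^ 2 + ς ^ 2 / 4 * (2 * r / ς * t) := by
        rw [one_div]; gcongr
    _ = ς * r * t := by field_simp; ring

lemma min_le_objective (hmono : MonotoneOn φ (Ici 0)) {r s₀ t τ : ℝ} (hs₀ : 0 < s₀)
    (hφ : ∀ s ∈ Ioo 0 s₀, r ^ 2 * s ≤ φ s) (hτ : 0 < τ) :
    min (ς * r * t) (φ s₀ * t ^ 2) ≤ φ (1/τ) * t^2 + ς^2/4 * τ := by
  have hτ' : 0 < 1 / τ := by positivity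
  rcases lt_or_ge (1 / τ) s₀ with hsmall | hlarge
  · refine (min_le_left _ _).trans ?_
    calc ς * r * t = (r * t) * ς := by ring
      _ ≤ (r * t) ^ 2 / τ + ς ^ 2 / 4 * τ := mul_le_sq_div_add_sq_div_four_mul _ _ hτ
      _ = r ^ 2 * (1 / τ) * t ^ 2 + ς ^ 2 / 4 * τ := by ring
      _ ≤ φ (1/τ) * t^2 + ς^2/4 * τ := by gcongr; exact hφ _ ⟨hτ', hsmall⟩
  · refine (min_le_right _ _).trans ?_
    have := hmono hs₀.le hτ'.le hlarge
    nlinarith [sq_nonneg t]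

lemma eventually_lt_hS_div (hmono : MonotoneOn φ (Ici 0)) (hpos : ∀ t > (0:ℝ), 0 < φ t)
    {r : ℝ} (hφ : ∀ᶠ s in 𝓝[>] 0, r ^ 2 * s ≤ φ s) {a : ℝ} (ha : a < ς * r) :
    ∀ᶠ t in atTop, a < hS φ ς t / t := by
  obtain ⟨s₀, hs₀, hsub⟩ := mem_nhdsGT_iff_exists_Ioo_subset.1 hφ
  have hgrow : Tendsto (fun t => φ s₀ * t) atTop atTop :=
    tendsto_id.const_mul_atTop (hpos s₀ hs₀)
  filter_upwards [hgrow.eventually_gt_atTop a, eventually_gt_atTop 0] with t hat ht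
  calc a < min (ς * r) (φ s₀ * t) := lt_min ha hat
    _ = min (ς * r * t) (φ s₀ * t ^ 2) / t := by
        rw [← min_div_div_right ht.le]; field_simp
    _ ≤ hS φ ς t / t := by
        gcongr
        exact le_hS fun τ hτ => min_le_objective hmono hs₀ (fun s hs => hsub hs) hτ

end hS

theorem stmt4_general (φ : ℝ → ℝ)
    (hmono : MonotoneOn φ (Ici 0))
    (hnonneg : ∀ t ≥ (0:ℝ), 0 ≤ φ t) (hpos : ∀ t > (0:ℝ), 0 < φ t)
    (c : ℝ) (hc : 0 ≤ c)
    (hderiv : Tendsto (fun s => φ s / s) (𝓝[>] (0:ℝ)) (𝓝 c))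
    (ς : ℝ) (hς : 0 < ς) :
    Tendsto (fun t => hS φ ς t / t) atTop (𝓝 (Real.sqrt c * ς)) := by
  refine tendsto_order.2 ⟨fun a ha => ?_, fun b hb => ?_⟩
  · rcases hc.eq_or_lt with rfl | hc
    · refine eventually_lt_hS_div (r := 0) hmono hpos ?_ (by simpa using ha)
      exact eventually_nhdsWithin_of_forall fun s hs => by simpa using hnonneg s (le_of_lt hs)
    · obtain ⟨r, hr, hrc⟩ : ∃ r, max (a / ς) 0 < r ∧ r < Real.sqrt c :=
        exists_between (max_lt ((div_lt_iff₀ hς).2 ha) (Real.sqrt_pos.2 hc))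
      have hr₀ : 0 < r := (le_max_right _ _).trans_lt hr
      refine eventually_lt_hS_div hmono hpos
        (eventually_mul_le_of_tendsto_div hderiv ((Real.lt_sqrt hr₀.le).1 hrc)) ?_
      rw [mul_comm]
      exact (div_lt_iff₀ hς).1 ((le_max_left _ _).trans_lt hr)
  · obtain ⟨r, hcr, hrb⟩ : ∃ r, Real.sqrt c < r ∧ r < b / ς :=
      exists_between ((lt_div_iff₀ hς).2 hb)
    have hr₀ : 0 < r := (Real.sqrt_nonneg c).trans_lt hcr
    filter_upwards [eventually_hS_div_le hnonneg hς hr₀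
      (eventually_le_mul_of_tendsto_div hderiv (Real.lt_sq_of_sqrt_lt hcr))] with t ht
    calc hS φ ς t / t ≤ ς * r := ht
      _ < b := by rw [mul_comm]; exact (lt_div_iff₀ hς).1 hrb

/-- If `φ` is bounded and has finite right derivative `c = φ'(0⁺)` at `0`, then
`h_ς(t)/t → √c · ς` as `t → ∞`. -/
theorem stmt4 (φ : ℝ → ℝ)
    (hcont : ContinuousOn φ (Ici 0)) (hmono : MonotoneOn φ (Ici 0))
    (hnonneg : ∀ t ≥ (0:ℝ), 0 ≤ φ t) (hφ0 : φ 0 = 0) (hpos : ∀ t > (0:ℝ), 0 < φ t)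
    (c : ℝ) (hc : 0 ≤ c)
    (hderiv : Tendsto (fun s => φ s / s) (𝓝[>] (0:ℝ)) (𝓝 c))
    (hbdd : ∃ M : ℝ, ∀ t ≥ (0:ℝ), φ t ≤ M)
    (ς : ℝ) (hς : 0 < ς) :
    Tendsto (fun t => hS φ ς t / t) atTop (𝓝 (Real.sqrt c * ς)) :=
  stmt4_general φ hmono hnonneg hpos c hc hderiv ς hς
end

section
/- Suppose φ(∞) := lim_{t→∞} φ(t) ∈ (0,∞). Then for every ς ∈ (0,∞), lim_{t→0⁺} h_ς(t)/t² = φ(∞). Moreover any minimizer τ_{ς,t} of τ ↦ φ(1/τ)·t² + (ς²/4)·τ satisfies τ_{ς,t} ≤ (4φ(∞)/ς²)·t² + t³. -/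
open Set Filter Topology

/-- If `φ(∞) = L ∈ (0,∞)` then `h_ς(t)/t² → L` as `t → 0⁺`, and any minimizer
`τ` of `τ ↦ φ(1/τ)t² + (ς²/4)τ` satisfies `τ ≤ (4L/ς²)t² + t³`. -/
theorem stmt6 (φ : ℝ → ℝ)
    (hcont : ContinuousOn φ (Ici 0)) (hmono : MonotoneOn φ (Ici 0))
    (hnonneg : ∀ t ≥ (0:ℝ), 0 ≤ φ t) (hφ0 : φ 0 = 0) (hpos : ∀ t > (0:ℝ), 0 < φ t)
    (L : ℝ) (hL : Tendsto φ atTop (𝓝 L)) (hLpos : 0 < L)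
    (ς : ℝ) (hς : 0 < ς) :
    Tendsto (fun t => hS φ ς t / t^2) (𝓝[>] (0:ℝ)) (𝓝 L) ∧
    ∀ t > (0:ℝ), ∀ τ > (0:ℝ),
      φ (1/τ) * t^2 + ς^2/4 * τ = hS φ ς t → τ ≤ 4*L/ς^2 * t^2 + t^3 := by
  have hφle : ∀ x ≥ (0:ℝ), φ x ≤ L := by
    intro x hx
    refine ge_of_tendsto hL ?_
    filter_upwards [eventually_ge_atTop x] with y hy
    exact hmono hx (hx.trans hy) hy
  have hbdd : ∀ t : ℝ, BddBelow {y : ℝ | ∃ τ : ℝ, 0 < τ ∧ y = φ (1/τ) * t^2 + ς^2/4 * τ} := by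
    intro t
    refine ⟨0, fun y hy => ?_⟩
    obtain ⟨τ, hτ, rfl⟩ := hy
    have h1 : 0 ≤ φ (1/τ) := hnonneg _ (by positivity)
    nlinarith [sq_nonneg t, sq_nonneg ς, hτ.le]
  have hne : ∀ t : ℝ, ({y : ℝ | ∃ τ : ℝ, 0 < τ ∧ y = φ (1/τ) * t^2 + ς^2/4 * τ}).Nonempty :=
    fun t => ⟨_, ⟨1, one_pos, rfl⟩⟩
  have hub : ∀ t : ℝ, hS φ ς t ≤ L * t^2 := by
    intro t
    refine le_of_forall_pos_le_add (fun ε hε => ?_)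
    set τ := 4*ε/ς^2 with hτdef
    have hτ : 0 < τ := by positivity
    have h1 : hS φ ς t ≤ φ (1/τ) * t^2 + ς^2/4 * τ := csInf_le (hbdd t) ⟨τ, hτ, rfl⟩
    have h2 : φ (1/τ) * t^2 ≤ L * t^2 :=
      mul_le_mul_of_nonneg_right (hφle _ (by positivity)) (sq_nonneg t)
    have h3 : ς^2/4 * τ = ε := by
      rw [hτdef]; field_simp
    linarith
  refine ⟨?_, ?_⟩
  · rw [Metric.tendsto_nhds]
    intro ε hε
    -- find M with φ x > L - ε/2 for x ≥ M
    have hev : ∀ᶠ x in atTop, L - ε/2 < φ x :=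
      hL.eventually (eventually_gt_nhds (by linarith))
    obtain ⟨M₀, hM₀⟩ := hev.exists_forall_of_atTop
    set M := max M₀ 1 with hMdef
    have hM : 0 < M := lt_of_lt_of_le one_pos (le_max_right _ _)
    have hMφ : ∀ x ≥ M, L - ε/2 < φ x := fun x hx => hM₀ x ((le_max_left _ _).trans hx)
    set δ := Real.sqrt (ς^2/(4*M*L)) with hδdef
    have hδ : 0 < δ := Real.sqrt_pos.mpr (by positivity)
    filter_upwards [Ioo_mem_nhdsGT_of_mem (by constructor <;> simp [hδ.le, hδ] : (0:ℝ) ∈ Ico 0 δ)]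
      with t ht
    obtain ⟨ht0, htδ⟩ := ht
    have ht2 : t^2 < ς^2/(4*M*L) := by
      have := Real.sq_sqrt (show (0:ℝ) ≤ ς^2/(4*M*L) by positivity)
      nlinarith
    have hlb : (L - ε/2) * t^2 ≤ hS φ ς t := by
      refine le_csInf (hne t) ?_
      rintro y ⟨τ, hτ, rfl⟩
      have hφnn : 0 ≤ φ (1/τ) := hnonneg _ (by positivity)
      have key : 4*M*L*t^2 < ς^2 := by
        rw [lt_div_iff₀ (by positivity)] at ht2; nlinarith
      rcases le_or_gt (1/M) τ with hcase | hcase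
      · -- τ large
        have hτM : 1 ≤ τ * M := (div_le_iff₀ hM).mp hcase
        have h4 : ς^2 ≤ ς^2 * (τ*M) := le_mul_of_one_le_right (by positivity) hτM
        have h5' : 4*M*(L*t^2) < 4*M*(ς^2/4*τ) := by nlinarith
        have h5 : L*t^2 < ς^2/4*τ := (mul_lt_mul_iff_right₀ (by positivity : (0:ℝ) < 4*M)).mp h5'
        nlinarith [mul_nonneg hφnn (sq_nonneg t), sq_nonneg t, hε]
      · -- τ small: 1/τ ≥ M
        have h1 : M ≤ 1/τ := by
          rw [le_div_iff₀ hτ]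
          rw [lt_div_iff₀ hM] at hcase
          nlinarith
        have h2 : L - ε/2 < φ (1/τ) := hMφ _ h1
        nlinarith [sq_nonneg t, sq_nonneg ς, hτ.le, mul_le_mul_of_nonneg_right h2.le (sq_nonneg t)]
    have ht2pos : (0:ℝ) < t^2 := by positivity
    have hle : hS φ ς t / t^2 ≤ L := by
      rw [div_le_iff₀ ht2pos]; linarith [hub t]
    have hge : L - ε/2 ≤ hS φ ς t / t^2 := by
      rw [le_div_iff₀ ht2pos]; linarith [hlb]
    rw [Real.dist_eq, abs_sub_lt_iff]
    constructor <;> linarith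
  · intro t ht τ hτ heq
    have h1 : φ (1/τ) * t^2 + ς^2/4 * τ ≤ L * t^2 := heq ▸ hub t
    have hφnn : 0 ≤ φ (1/τ) := hnonneg _ (by positivity)
    have ht3 : 0 < t^3 := by positivity
    have h2 : ς^2/4 * τ ≤ L * t^2 := by nlinarith [mul_nonneg hφnn (sq_nonneg t)]
    have h6 : τ ≤ 4*L/ς^2 * t^2 := by
      rw [div_mul_eq_mul_div, le_div_iff₀ (by positivity : (0:ℝ) < ς^2)]
      nlinarith
    linarith
end

section
/- Suppose φ(∞) ∈ (0,∞) and φ'(0⁺) ∈ (0,∞]. Then for every t ≥ 0, lim_{ς→∞} h_ς(t) = φ(∞)·t². -/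
open Set Filter Topology

/-- If `φ(∞) = L ∈ (0,∞)` and `φ'(0⁺) ∈ (0,∞]`, then `h_ς(t) → L·t²` as `ς → ∞`. -/
theorem stmt7 (φ : ℝ → ℝ)
    (hcont : ContinuousOn φ (Ici 0)) (hmono : MonotoneOn φ (Ici 0))
    (hnonneg : ∀ t ≥ (0:ℝ), 0 ≤ φ t) (hφ0 : φ 0 = 0) (hpos : ∀ t > (0:ℝ), 0 < φ t)
    (L : ℝ) (hL : Tendsto φ atTop (𝓝 L)) (hLpos : 0 < L)
    (hderiv : (∃ c > (0:ℝ), Tendsto (fun s => φ s / s) (𝓝[>] (0:ℝ)) (𝓝 c)) ∨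
      Tendsto (fun s => φ s / s) (𝓝[>] (0:ℝ)) atTop)
    (t : ℝ) (ht : 0 ≤ t) :
    Tendsto (fun ς => hS φ ς t) atTop (𝓝 (L * t^2)) := by
  -- φ is bounded above by L on [0,∞)
  have hφle : ∀ s, 0 ≤ s → φ s ≤ L := by
    intro s hs
    refine ge_of_tendsto hL ?_
    filter_upwards [eventually_ge_atTop s] with u hu
    exact hmono hs (le_trans hs hu) hu
  rw [Metric.tendsto_atTop]
  intro ε hε
  -- lower bound preparation: δ > 0 s.t. for τ ≤ δ, φ(1/τ)·t² ≥ L t² − ε/2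
  obtain ⟨δ, hδ, hδ2⟩ : ∃ δ > (0:ℝ), ∀ τ, 0 < τ → τ ≤ δ →
      L * t^2 - ε/2 ≤ φ (1/τ) * t^2 := by
    rcases eq_or_lt_of_le ht with h0 | htpos
    · refine ⟨1, one_pos, fun τ h1 h2 => ?_⟩
      subst h0
      have := hnonneg (1/τ) (by positivity)
      nlinarith
    · have hε' : (0:ℝ) < ε/2/t^2 := by positivity
      have h2 : ∀ᶠ s in atTop, L - ε/2/t^2 ≤ φ s :=
        hL.eventually (eventually_ge_nhds (by linarith))
      obtain ⟨a, ha⟩ := eventually_atTop.mp h2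
      refine ⟨1 / max a 1, by positivity, fun τ hτ hτδ => ?_⟩
      have hm : (0:ℝ) < max a 1 := lt_of_lt_of_le one_pos (le_max_right _ _)
      have h1τ : max a 1 ≤ 1/τ := by
        rw [le_div_iff₀ hτ]
        have h := (le_div_iff₀ hm).mp hτδ
        nlinarith
      have := ha (1/τ) (le_trans (le_max_left _ _) h1τ)
      have ht2 : (0:ℝ) < t^2 := by positivity
      have hdiv : ε/2/t^2 * t^2 = ε/2 := div_mul_cancel₀ _ ht2.ne'
      nlinarith [mul_le_mul_of_nonneg_right this ht2.le]
  set K := max 1 (4*(L*t^2)/δ) with hK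
  refine ⟨K, fun ς hς => ?_⟩
  have hς1 : (1:ℝ) ≤ ς := le_trans (le_max_left _ _) hς
  have hςd : 4*(L*t^2)/δ ≤ ς := le_trans (le_max_right _ _) hς
  have hςd' : 4*(L*t^2) ≤ ς * δ := by rwa [div_le_iff₀ hδ] at hςd
  set Sset := {y : ℝ | ∃ τ : ℝ, 0 < τ ∧ y = φ (1/τ) * t^2 + ς^2/4 * τ} with hSset
  have hne : Sset.Nonempty := ⟨_, 1, one_pos, rfl⟩
  have hbdd : BddBelow Sset := by
    refine ⟨0, ?_⟩
    rintro y ⟨τ, hτ, rfl⟩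
    have h1 : 0 ≤ φ (1/τ) := hnonneg _ (by positivity)
    nlinarith [sq_nonneg ς, sq_nonneg t]
  -- lower bound
  have hlow : L * t^2 - ε/2 ≤ hS φ ς t := by
    apply le_csInf hne
    rintro y ⟨τ, hτ, rfl⟩
    rcases le_or_gt τ δ with hle | hgt
    · have := hδ2 τ hτ hle
      nlinarith [sq_nonneg ς]
    · have h1 : 0 ≤ φ (1/τ) * t^2 :=
        mul_nonneg (hnonneg _ (by positivity)) (sq_nonneg t)
      have hςpos : (0:ℝ) < ς := lt_of_lt_of_le one_pos hς1
      have hsq : ς ≤ ς^2 := by nlinarith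
      have h2 : ς * δ ≤ ς^2 * τ := by
        nlinarith [mul_le_mul_of_nonneg_right hsq hδ.le,
          mul_le_mul_of_nonneg_left hgt.le (sq_nonneg ς)]
      nlinarith
  -- upper bound
  have hup : hS φ ς t ≤ L * t^2 := by
    refine le_of_forall_pos_le_add fun ε' hε' => ?_
    have hden : (0:ℝ) < ς^2/4 + 1 := by positivity
    set τ := ε' / (ς^2/4 + 1) with hτdef
    have hτ : 0 < τ := by positivity
    have hmem : φ (1/τ) * t^2 + ς^2/4 * τ ∈ Sset := ⟨τ, hτ, rfl⟩
    have h1 : hS φ ς t ≤ φ (1/τ) * t^2 + ς^2/4 * τ := csInf_le hbdd hmem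
    have h2 : φ (1/τ) ≤ L := hφle _ (by positivity)
    have h3 : ς^2/4 * τ ≤ ε' := by
      rw [hτdef]
      rw [mul_div_assoc', div_le_iff₀ hden]  -- maybe wrong; fallback nlinarith
      nlinarith [sq_nonneg ς, hε'.le]
    nlinarith [sq_nonneg t]
  rw [Real.dist_eq, abs_lt]
  constructor <;> linarith
end

section
/- Let φ(t) = min(t^α, 1) with α ∈ (0,1) and ς ∈ (0,∞). Then for every t ≥ 0, h_ς(t) = min( t², (1+α)·(ς²/(4α))^{α/(1+α)}·t^{2/(1+α)} ), where h_ς(t) := inf_{τ>0}{ φ(1/τ)·t² + (ς²/4)·τ }. In particular h_ς is sub-quadratic (grows like t^{2/(1+α)}) for large t. -/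
/-!
For `τ > 0` we have `φ(1/τ) = min(τ^{-α}, 1)`, so the quantity under the infimum is the
smaller of `t² + (ς²/4)τ`, whose infimum `t²` is approached as `τ → 0`, and
`t²τ^{-α} + (ς²/4)τ`. The weighted AM–GM inequality with weights `1/(1+α)` and `α/(1+α)`
bounds the latter from below by `(1+α)(ς²/(4α))^{α/(1+α)} t^{2/(1+α)}`, with equality at
`τ^{1+α} = 4αt²/ς²`.
-/

open Set Filter Topology

/-- The convex lower envelope of `f` on `[0,∞)`. -/
noncomputable def convEnv (f : ℝ → ℝ) (t : ℝ) : ℝ :=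
  sSup {y : ℝ | ∃ g : ℝ → ℝ, ConvexOn ℝ (Ici 0) g ∧ (∀ s ∈ Ici (0:ℝ), g s ≤ f s) ∧ y = g t}

namespace Real

variable {α a b s τ : ℝ}

theorem one_add_mul_le_rpow_mul_rpow_neg_add_mul (hα : 0 < α) (hs : 0 ≤ s) (hτ : 0 < τ) :
    (1 + α) * s ≤ s ^ (1 + α) * τ ^ (-α) + α * τ := by
  have hα' : 0 < 1 + α := by linarith
  have amgm := geom_mean_le_arith_mean2_weighted (w₁ := 1 / (1 + α)) (w₂ := α / (1 + α))
    (p₁ := s ^ (1 + α) * τ ^ (-α)) (p₂ := τ) (by positivity) (by positivity) (by positivity)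
    hτ.le (by field_simp)
  have hgeom : (s ^ (1 + α) * τ ^ (-α)) ^ (1 / (1 + α)) * τ ^ (α / (1 + α)) = s := by
    rw [mul_rpow (by positivity) (by positivity), ← rpow_mul hs, ← rpow_mul hτ.le,
      mul_one_div_cancel hα'.ne', rpow_one, mul_assoc, ← rpow_add hτ, neg_mul, one_div,
      ← div_eq_mul_inv, neg_add_cancel, rpow_zero, mul_one]
  rw [hgeom] at amgm
  rw [← le_div_iff₀' hα']
  exact amgm.trans_eq (by ring)

theorem one_add_mul_mul_rpow_div (hα : 0 < α) (ha : 0 ≤ a) (hb : 0 < b) :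
    (1 + α) * b * (a / b) ^ (1 / (1 + α))
      = (1 + α) * b ^ (α / (1 + α)) * a ^ (1 / (1 + α)) := by
  have hexp : α / (1 + α) = 1 - 1 / (1 + α) := by field_simp; ring
  rw [div_rpow ha hb.le, hexp, rpow_sub hb, rpow_one]
  field_simp

theorem mul_rpow_one_div_one_add_rpow (hα : 0 < α) (ha : 0 ≤ a) (hb : 0 < b) :
    b * ((a / b) ^ (1 / (1 + α))) ^ (1 + α) = a := by
  rw [one_div, rpow_inv_rpow (div_nonneg ha hb.le) (by positivity), mul_div_cancel₀ _ hb.ne']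

theorem le_mul_rpow_neg_add_mul (hα : 0 < α) (ha : 0 ≤ a) (hb : 0 < b) (hτ : 0 < τ) :
    (1 + α) * b ^ (α / (1 + α)) * a ^ (1 / (1 + α)) ≤ a * τ ^ (-α) + α * b * τ := by
  set s := (a / b) ^ (1 / (1 + α))
  have ha_eq : a = b * s ^ (1 + α) := (mul_rpow_one_div_one_add_rpow hα ha hb).symm
  calc (1 + α) * b ^ (α / (1 + α)) * a ^ (1 / (1 + α))
      = b * ((1 + α) * s) := by rw [← one_add_mul_mul_rpow_div hα ha hb]; ring
    _ ≤ b * (s ^ (1 + α) * τ ^ (-α) + α * τ) := by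
      gcongr; exact one_add_mul_le_rpow_mul_rpow_neg_add_mul hα (by positivity) hτ
    _ = a * τ ^ (-α) + α * b * τ := by rw [ha_eq]; ring

theorem exists_mul_rpow_neg_add_mul_eq (hα : 0 < α) (ha : 0 < a) (hb : 0 < b) :
    ∃ τ > 0, a * τ ^ (-α) + α * b * τ
      = (1 + α) * b ^ (α / (1 + α)) * a ^ (1 / (1 + α)) := by
  set s := (a / b) ^ (1 / (1 + α))
  have hs : 0 < s := by positivity
  refine ⟨s, hs, ?_⟩
  have ha_eq : a = b * s ^ (1 + α) := (mul_rpow_one_div_one_add_rpow hα ha.le hb).symm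
  have hss : s ^ (1 + α) * s ^ (-α) = s := by rw [← rpow_add hs, add_neg_cancel_right, rpow_one]
  calc a * s ^ (-α) + α * b * s = b * (s ^ (1 + α) * s ^ (-α)) + α * b * s := by
        rw [ha_eq]; ring
    _ = (1 + α) * b * s := by rw [hss]; ring
    _ = _ := one_add_mul_mul_rpow_div hα ha.le hb

end Real

/-- For `φ(t) = min(t^α, 1)` with `α ∈ (0,1)`, an explicit formula for `h_ς`:
`h_ς(t) = min( t², (1+α)(ς²/(4α))^{α/(1+α)} t^{2/(1+α)} )`. -/
theorem stmt9 (α ς : ℝ) (hα : α ∈ Ioo (0:ℝ) 1) (hς : 0 < ς) (t : ℝ) (ht : 0 ≤ t) :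
    hS (fun s => min (Real.rpow s α) 1) ς t
      = min (t^2)
          ((1+α) * Real.rpow (ς^2/(4*α)) (α/(1+α)) * Real.rpow t (2/(1+α))) := by
  obtain ⟨hα0, -⟩ := hα
  have hς_sq : ς ^ 2 / 4 = α * (ς ^ 2 / (4 * α)) := by field_simp
  set b := ς ^ 2 / (4 * α)
  have hb : 0 < b := by positivity
  have hrpow_t : Real.rpow t (2 / (1 + α)) = (t ^ 2) ^ (1 / (1 + α)) := by
    rw [Real.rpow_eq_pow, ← Real.rpow_natCast_mul ht, Nat.cast_ofNat, mul_one_div]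
  have hval : ∀ τ > 0, min ((1 / τ) ^ α) 1 * t ^ 2 + ς ^ 2 / 4 * τ
      = min (t ^ 2 + α * b * τ) (t ^ 2 * τ ^ (-α) + α * b * τ) := by
    intro τ hτ
    rw [hς_sq, one_div, Real.inv_rpow hτ.le, ← Real.rpow_neg hτ.le,
      min_mul_of_nonneg _ _ (sq_nonneg t), min_add_add_right, min_comm, one_mul, mul_comm (τ ^ (-α))]
  simp only [hS, hrpow_t, Real.rpow_eq_pow]
  set K := (1 + α) * b ^ (α / (1 + α)) * (t ^ 2) ^ (1 / (1 + α))
  set S := {y | ∃ τ > (0 : ℝ), y = min ((1 / τ) ^ α) 1 * t ^ 2 + ς ^ 2 / 4 * τ}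
  have hbdd : BddBelow S := ⟨0, by rintro _ ⟨τ, hτ, rfl⟩; positivity⟩
  have hle : ∀ τ > 0, sInf S ≤ min (t ^ 2 + α * b * τ) (t ^ 2 * τ ^ (-α) + α * b * τ) :=
    fun τ hτ => (csInf_le hbdd ⟨τ, hτ, rfl⟩).trans_eq (hval τ hτ)
  have hle_sq : sInf S ≤ t ^ 2 := le_of_forall_pos_le_add fun ε hε =>
    calc sInf S ≤ t ^ 2 + α * b * (ε / (α * b)) :=
          (hle _ (by positivity)).trans (min_le_left _ _)
      _ = t ^ 2 + ε := by field_simp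
  refine le_antisymm (le_min hle_sq ?_) (le_csInf ⟨_, 1, one_pos, rfl⟩ ?_)
  · rcases ht.eq_or_lt with rfl | ht
    · have hK : K = 0 := by
        simp only [K]; rw [zero_pow two_ne_zero, Real.zero_rpow (by positivity), mul_zero]
      simpa [hK] using hle_sq
    · obtain ⟨τ, hτ, hτK⟩ :=
        Real.exists_mul_rpow_neg_add_mul_eq hα0 (by positivity : 0 < t ^ 2) hb
      exact (hle τ hτ).trans ((min_le_right _ _).trans hτK.le)
  · rintro _ ⟨τ, hτ, rfl⟩
    rw [hval τ hτ]
    exact min_le_min (le_add_of_nonneg_right (by positivity))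
      (Real.le_mul_rpow_neg_add_mul hα0 (sq_nonneg t) hb hτ)
end

section
/- For φ₂(t) = t/(1+t) and ς ∈ (0,∞), the function h_ς^{(2)}(t) := inf_{τ>0}{ φ₂(1/τ)·t² + (ς²/4)·τ } equals t² for 0 ≤ t ≤ ς/2 and ς·t − ς²/4 for t ≥ ς/2; in particular h_ς^{(2)} is convex, so it coincides with its convex envelope. -/
open Set Filter Topology

/-!
Since `φ₂(1/τ) = 1/(1+τ)`, `h(t)` is the infimum over `τ > 0` of `t²/(1+τ) + ς²τ/4`. This is
`≥ t²` when `t ≤ ς/2`, with value `t²` approached as `τ → 0`, and `≥ ςt − ς²/4` by AM–GM, with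
equality at `τ = 2t/ς − 1 ≥ 0` when `t ≥ ς/2`. The resulting function is twice a Huber loss, hence
convex, and a convex function is its own convex envelope.
-/

lemma div_one_add_div_one_div {τ : ℝ} (hτ : τ ≠ 0) : 1 / τ / (1 + 1 / τ) = 1 / (1 + τ) := by
  rw [one_add_div hτ, div_div_div_cancel_right₀ hτ, add_comm]

lemma hS_phi2_eq_sInf_image (ς t : ℝ) :
    hS (fun s => s / (1 + s)) ς t = sInf ((fun τ => t ^ 2 / (1 + τ) + ς ^ 2 / 4 * τ) '' Ioi 0) := by
  unfold hS
  congr 1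
  ext y
  simp only [mem_ofPred_eq, mem_image, mem_Ioi]
  refine exists_congr fun τ => and_congr_right fun hτ => ?_
  rw [div_one_add_div_one_div hτ.ne', eq_comm]
  ring_nf

lemma ContinuousOn.isGLB_image_Ioi {f : ℝ → ℝ} {a b : ℝ} (hf : ContinuousOn f (Ici a)) (hb : a ≤ b)
    (hmin : ∀ x ∈ Ioi a, f b ≤ f x) : IsGLB (f '' Ioi a) (f b) := by
  refine isGLB_of_mem_closure (forall_mem_image.2 hmin) ?_
  rw [← closure_Ioi] at hf
  exact hf.image_closure (mem_image_of_mem f (by rwa [closure_Ioi]))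

lemma sq_le_div_one_add_add {t c τ : ℝ} (hτ : 0 ≤ τ) (ht : t ^ 2 ≤ c) :
    t ^ 2 ≤ t ^ 2 / (1 + τ) + c * τ := by
  have h1τ : 0 < 1 + τ := by linarith
  rw [div_add' _ _ _ h1τ.ne', le_div_iff₀ h1τ]
  nlinarith [mul_nonneg hτ (sub_nonneg.2 ht), mul_nonneg hτ hτ, sq_nonneg t]

lemma mul_sub_le_div_one_add_add {t ς τ : ℝ} (hτ : -1 < τ) :
    ς * t - ς ^ 2 / 4 ≤ t ^ 2 / (1 + τ) + ς ^ 2 / 4 * τ := by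
  have h1τ : 0 < 1 + τ := by linarith
  rw [div_add' _ _ _ h1τ.ne', le_div_iff₀ h1τ]
  nlinarith [sq_nonneg (t - ς * (1 + τ) / 2)]

lemma hS_phi2_eq_of_forall_le {ς t τ₀ : ℝ} (hτ₀ : 0 ≤ τ₀)
    (hmin : ∀ τ > 0, t ^ 2 / (1 + τ₀) + ς ^ 2 / 4 * τ₀ ≤ t ^ 2 / (1 + τ) + ς ^ 2 / 4 * τ) :
    hS (fun s => s / (1 + s)) ς t = t ^ 2 / (1 + τ₀) + ς ^ 2 / 4 * τ₀ := by
  have hcont : ContinuousOn (fun τ : ℝ => t ^ 2 / (1 + τ) + ς ^ 2 / 4 * τ) (Ici 0) :=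
    (continuousOn_const.div (by fun_prop) fun τ hτ => by rw [mem_Ici] at hτ; positivity).add (by fun_prop)
  rw [hS_phi2_eq_sInf_image,
    (hcont.isGLB_image_Ioi hτ₀ hmin).csInf_eq (nonempty_Ioi.image _)]

lemma hS_phi2_of_le_half {ς t : ℝ} (ht : 0 ≤ t) (htς : t ≤ ς / 2) :
    hS (fun s => s / (1 + s)) ς t = t ^ 2 := by
  have hsq : t ^ 2 ≤ ς ^ 2 / 4 := by nlinarith
  rw [hS_phi2_eq_of_forall_le le_rfl]
  · simp
  · intro τ hτ
    simpa using sq_le_div_one_add_add hτ.le hsq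

lemma hS_phi2_of_half_le {ς t : ℝ} (hς : 0 < ς) (htς : ς / 2 ≤ t) :
    hS (fun s => s / (1 + s)) ς t = ς * t - ς ^ 2 / 4 := by
  have ht : t ≠ 0 := by linarith
  have hτ₀ : 0 ≤ 2 * t / ς - 1 := by rw [sub_nonneg, le_div_iff₀ hς]; linarith
  have hval : t ^ 2 / (1 + (2 * t / ς - 1)) + ς ^ 2 / 4 * (2 * t / ς - 1) = ς * t - ς ^ 2 / 4 := by
    field_simp
    ring
  rw [hS_phi2_eq_of_forall_le hτ₀ fun τ hτ => hval ▸ mul_sub_le_div_one_add_add (by linarith), hval]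

/-- Twice the Huber loss with threshold `ς / 2`, written so that its convexity is structural. -/
noncomputable def huber (ς t : ℝ) : ℝ := ς * t - ς ^ 2 / 4 + max (ς / 2 - t) 0 ^ 2

lemma convexOn_huber (ς : ℝ) : ConvexOn ℝ univ (huber ς) := by
  have hmax : ConvexOn ℝ univ (fun t : ℝ => max (ς / 2 - t) 0) :=
    ((concaveOn_id convex_univ).neg.add_const (ς / 2)).sup (convexOn_const 0 convex_univ) |>.congr
      fun t _ => by simp [neg_add_eq_sub]
  exact ((LinearMap.mul ℝ ℝ ς).convexOn convex_univ |>.add_const (-(ς ^ 2 / 4))).add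
    (hmax.pow (fun _ _ => le_max_right _ _) 2) |>.congr fun t _ => by simp [huber, sub_eq_add_neg]

lemma hS_phi2_eq_huber {ς t : ℝ} (hς : 0 < ς) (ht : 0 ≤ t) :
    hS (fun s => s / (1 + s)) ς t = huber ς t := by
  rcases le_total t (ς / 2) with htς | htς
  · rw [hS_phi2_of_le_half ht htς, huber, max_eq_left (by linarith)]
    ring
  · rw [hS_phi2_of_half_le hς htς, huber, max_eq_right (by linarith)]
    ring

lemma convEnv_eq_of_convexOn {f : ℝ → ℝ} (hf : ConvexOn ℝ (Ici 0) f) {t : ℝ} (ht : 0 ≤ t) :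
    convEnv f t = f t :=
  IsGreatest.csSup_eq ⟨⟨f, hf, fun _ _ => le_rfl, rfl⟩, by rintro _ ⟨g, -, hgf, rfl⟩; exact hgf t ht⟩

/-- For `φ₂(t) = t/(1+t)`, `h_ς^{(2)}` equals `t²` for `t ≤ ς/2` and `ςt − ς²/4`
for `t ≥ ς/2`; it is convex on `[0,∞)` and coincides with its convex envelope. -/
theorem stmt10 (ς : ℝ) (hς : 0 < ς) :
    (∀ t : ℝ, 0 ≤ t → t ≤ ς/2 → hS (fun s => s / (1 + s)) ς t = t^2) ∧
    (∀ t : ℝ, ς/2 ≤ t → hS (fun s => s / (1 + s)) ς t = ς*t - ς^2/4) ∧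
    ConvexOn ℝ (Ici 0) (hS (fun s => s / (1 + s)) ς) ∧
    (∀ t ≥ (0:ℝ), convEnv (hS (fun s => s / (1 + s)) ς) t
      = hS (fun s => s / (1 + s)) ς t) := by
  have hconv : ConvexOn ℝ (Ici 0) (hS (fun s => s / (1 + s)) ς) :=
    (convexOn_huber ς).subset (subset_univ _) (convex_Ici 0) |>.congr
      fun t ht => (hS_phi2_eq_huber hς ht).symm
  exact ⟨fun t ht htς => hS_phi2_of_le_half ht htς, fun t htς => hS_phi2_of_half_le hς htς, hconv,
    fun t ht => convEnv_eq_of_convexOn hconv ht⟩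
end
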